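/- arXiv:1610.08217 — 2 statements merged into one kernel-verified Lean document; each statement's English description precedes it below -/
import Mathlib

section
/- (Identity (F8) in the proof of Theorem 2) The vectors x and y satisfy λ³x = λ²Bx − λ(ΔB₂)x + (D_Δ)x − y. -/
open Matrix ENNReal

namespace PercNB

variable {V : Type*} [Fintype V] [DecidableEq V]

/-- `p : Fin (g+1) → V` is a length-`g` directed path in the simple graph `G`:
`g+1` pairwise distinct vertices with consecutive vertices adjacent. -/
def IsDiPath (G : SimpleGraph V) (g : ℕ) (p : Fin (g+1) → V) : Prop :=
  Function.Injective p ∧ ∀ k : Fin g, G.Adj (p k.castSucc) (p k.succ)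

instance (G : SimpleGraph V) [DecidableRel G.Adj] (g : ℕ) :
    DecidablePred (IsDiPath G g) := fun p =>
  inferInstanceAs (Decidable (Function.Injective p ∧ ∀ k : Fin g, G.Adj (p k.castSucc) (p k.succ)))

/-- The type of length-`g` directed paths of `G`. -/
abbrev DiPath (G : SimpleGraph V) (g : ℕ) := {p : Fin (g+1) → V // IsDiPath G g p}

/-- The `g`-th-order non-backtracking matrix `B^(g)` of `G`, indexed by the length-`g`
directed paths of `G`: the `(p, q)` entry is `1` if `q k = p (k+1)` for `1 ≤ k ≤ g` and
`(p 1, …, p (g+1), q (g+1))` is a length-`(g+1)` directed path, and `0` otherwise. -/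
def NBM (G : SimpleGraph V) [DecidableRel G.Adj] (g : ℕ) :
    Matrix (DiPath G g) (DiPath G g) ℂ := fun p q =>
  if (∀ k : Fin g, q.1 k.castSucc = p.1 k.succ) ∧
      IsDiPath G (g+1) (Fin.snoc p.1 (q.1 (Fin.last g))) then 1 else 0

/-- The spectral radius of a finite square complex matrix:
the maximum modulus of its eigenvalues (`0` if the index type is empty). -/
noncomputable def specRad {n : Type*} [Fintype n] [DecidableEq n] (X : Matrix n n ℂ) : ℝ≥0∞ :=
  spectralRadius ℂ X

/-- `c : Fin k → V` is a simple cycle of length `k ≥ 3` in `G`: pairwise distinct vertices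
with `c t` adjacent to `c (t+1)` for `1 ≤ t ≤ k-1` and `c k` adjacent to `c 1`. -/
def IsSimpleCycle (G : SimpleGraph V) (k : ℕ) (c : Fin k → V) : Prop :=
  3 ≤ k ∧ Function.Injective c ∧
    ∀ t : Fin k, G.Adj (c t) (c ⟨(t.val + 1) % k, Nat.mod_lt _ t.pos⟩)

/-- The arc relation of the digraph `G^(g)` on the length-`g` directed paths of `G`:
`p → q` exactly when `B^(g)_{p,q} = 1`. -/
def NBArc (G : SimpleGraph V) (g : ℕ) (p q : DiPath G g) : Prop :=
  (∀ k : Fin g, q.1 k.castSucc = p.1 k.succ) ∧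
    IsDiPath G (g+1) (Fin.snoc p.1 (q.1 (Fin.last g)))

/-- The arc relation of the line digraph `L(G^(g-1))` (for `g ≥ 1`), under the identification
of its vertices — the arcs `(i₁,…,i_g) → (i₂,…,i_{g+1})` of `G^(g-1)` — with the length-`g`
directed paths `(i₁,…,i_{g+1})` of `G`: there is an arc `p → q` exactly when the arc
corresponding to `p` ends at the tail of the arc corresponding to `q`, i.e. when
`q k = p (k+1)` for `1 ≤ k ≤ g`. -/
def LineArc (G : SimpleGraph V) (g : ℕ) (p q : DiPath G g) : Prop :=
  ∀ k : Fin g, q.1 k.castSucc = p.1 k.succ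

/-- `c : Fin k → α` is a directed cycle of length `k` with respect to the arc relation `r`:
`k` pairwise distinct vertices with an arc from each to the cyclically next one. -/
def IsDiCycle {α : Type*} (r : α → α → Prop) (k : ℕ) (c : Fin k → α) : Prop :=
  Function.Injective c ∧ ∀ t : Fin k, r (c t) (c ⟨(t.val + 1) % k, Nat.mod_lt _ t.pos⟩)

/-- The type of directed edges of `G`: ordered pairs of adjacent vertices. -/
abbrev DiEdge (G : SimpleGraph V) := {e : V × V // G.Adj e.1 e.2}

/-- The standard non-backtracking matrix `B = B^(1)`, indexed by directed edges:
`B_{(i,j),(k,l)} = 1` iff `j = k`, `l ≠ i` and `j` is adjacent to `l`. -/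
def Bmat (G : SimpleGraph V) [DecidableRel G.Adj] : Matrix (DiEdge G) (DiEdge G) ℂ :=
  fun e f => if e.1.2 = f.1.1 ∧ f.1.2 ≠ e.1.1 ∧ G.Adj e.1.2 f.1.2 then 1 else 0

/-- `(ΔB₁)_{(i,j),(k,l)} = 1` iff `B_{(i,j),(k,l)} = 1` and `i` is adjacent to `l`. -/
def dB1 (G : SimpleGraph V) [DecidableRel G.Adj] : Matrix (DiEdge G) (DiEdge G) ℂ :=
  fun e f => if (e.1.2 = f.1.1 ∧ f.1.2 ≠ e.1.1 ∧ G.Adj e.1.2 f.1.2) ∧ G.Adj e.1.1 f.1.2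
    then 1 else 0

/-- `(ΔB₂)_{(i,j),(k,l)} = 1` iff `l = i` and `j` is adjacent to `k`. -/
def dB2 (G : SimpleGraph V) [DecidableRel G.Adj] : Matrix (DiEdge G) (DiEdge G) ℂ :=
  fun e f => if f.1.2 = e.1.1 ∧ G.Adj e.1.2 f.1.1 then 1 else 0

/-- The diagonal matrix `D_Δ` whose `((i,j),(i,j))` entry is the number of common
neighbours of `i` and `j`. -/
noncomputable def Ddel (G : SimpleGraph V) [DecidableRel G.Adj] :
    Matrix (DiEdge G) (DiEdge G) ℂ :=
  Matrix.diagonal fun e =>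
    ((Finset.univ.filter fun v => G.Adj e.1.1 v ∧ G.Adj e.1.2 v).card : ℂ)

/-- The `8E × 8E` block matrix
`M = [[B, −ΔB₂, D_Δ − I, B − ΔB₁], [I, 0, 0, 0], [0, I, 0, 0], [0, 0, I, 0]]`. -/
noncomputable def Mmat (G : SimpleGraph V) [DecidableRel G.Adj] :
    Matrix ((DiEdge G ⊕ DiEdge G) ⊕ (DiEdge G ⊕ DiEdge G))
      ((DiEdge G ⊕ DiEdge G) ⊕ (DiEdge G ⊕ DiEdge G)) ℂ :=
  Matrix.fromBlocks
    (Matrix.fromBlocks (Bmat G) (-(dB2 G)) 1 0)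
    (Matrix.fromBlocks (Ddel G - 1) (Bmat G - dB1 G) 0 0)
    (Matrix.fromBlocks 0 1 0 0)
    (Matrix.fromBlocks 0 0 1 0)

/-- `x_{(i,j)} = Σ_k ψ_{(i,j,k)}`, the sum over all vertices `k` adjacent to `j` with
`k ≠ i`; equivalently, the sum of `ψ` over all length-2 directed paths starting `(i,j,·)`. -/
noncomputable def xvec (G : SimpleGraph V) [DecidableRel G.Adj] (ψ : DiPath G 2 → ℂ) :
    DiEdge G → ℂ := fun e =>
  ∑ p ∈ Finset.univ.filter (fun p : DiPath G 2 => p.1 0 = e.1.1 ∧ p.1 1 = e.1.2), ψ p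

/-- `y_{(i,j)} = Σ_k ψ_{(i,j,k)}`, the sum over all vertices `k` adjacent to both `i`
and `j`. -/
noncomputable def yvec (G : SimpleGraph V) [DecidableRel G.Adj] (ψ : DiPath G 2 → ℂ) :
    DiEdge G → ℂ := fun e =>
  ∑ p ∈ Finset.univ.filter
    (fun p : DiPath G 2 => p.1 0 = e.1.1 ∧ p.1 1 = e.1.2 ∧ G.Adj e.1.1 (p.1 2)), ψ p

/-- The block vector `z = (x, λ⁻¹x, λ⁻²x, λ⁻³x)`. -/
noncomputable def blockVec {G : SimpleGraph V} (lam : ℂ) (x : DiEdge G → ℂ) :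
    (DiEdge G ⊕ DiEdge G) ⊕ (DiEdge G ⊕ DiEdge G) → ℂ :=
  Sum.elim (Sum.elim x (lam⁻¹ • x)) (Sum.elim ((lam ^ 2)⁻¹ • x) ((lam ^ 3)⁻¹ • x))

/-- The vector `ψ` built from `x`:
`ψ_{(i,j,k)} = (λ²x_{(j,k)} − λx_{(k,i)} + x_{(i,j)})/(λ³+1)` if `i` and `k` are adjacent,
and `ψ_{(i,j,k)} = λ⁻¹ x_{(j,k)}` if `i` and `k` are not adjacent. -/
noncomputable def psiOf (G : SimpleGraph V) [DecidableRel G.Adj] (lam : ℂ)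
    (x : DiEdge G → ℂ) : DiPath G 2 → ℂ := fun p =>
  if h : G.Adj (p.1 0) (p.1 2) then
    (lam ^ 2 * x ⟨(p.1 1, p.1 2), by simpa using p.2.2 1⟩
      - lam * x ⟨(p.1 2, p.1 0), h.symm⟩
      + x ⟨(p.1 0, p.1 1), by simpa using p.2.2 0⟩) / (lam ^ 3 + 1)
  else lam⁻¹ * x ⟨(p.1 1, p.1 2), by simpa using p.2.2 1⟩

section Aux

variable {G : SimpleGraph V} [DecidableRel G.Adj]

lemma adj01 (p : DiPath G 2) : G.Adj (p.1 0) (p.1 1) := by simpa using p.2.2 0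
lemma adj12 (p : DiPath G 2) : G.Adj (p.1 1) (p.1 2) := by simpa using p.2.2 1
lemma ne02 (p : DiPath G 2) : p.1 0 ≠ p.1 2 := fun h => by simpa using p.2.1 h
lemma ne20 (p : DiPath G 2) : p.1 2 ≠ p.1 0 := fun h => by simpa using p.2.1 h

lemma castPred0 (h : (0:Fin 4) ≠ Fin.last 3) : Fin.castPred (0:Fin 4) h = (0:Fin 3) := rfl
lemma castLT1 (h : (1:Fin 4).val < 3) : Fin.castLT (1:Fin 4) h = (1:Fin 3) := rfl
lemma castLT2 (h : (2:Fin 4).val < 3) : Fin.castLT (2:Fin 4) h = (2:Fin 3) := rfl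
lemma last2 : Fin.last 2 = (2:Fin 3) := rfl
lemma castPred1 (h : (1:Fin 4) ≠ Fin.last 3) : Fin.castPred (1:Fin 4) h = (1:Fin 3) := rfl
lemma castPred2 (h : (2:Fin 4) ≠ Fin.last 3) : Fin.castPred (2:Fin 4) h = (2:Fin 3) := rfl

lemma mk3 {i j k : V} (h1 : G.Adj i j) (h2 : G.Adj j k) (h3 : i ≠ k) :
    IsDiPath G 2 ![i, j, k] := by
  have e1 : i ≠ j := h1.ne
  have e2 : j ≠ k := h2.ne
  constructor
  · intro a b hab
    fin_cases a <;> fin_cases b <;> simp_all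
  · intro t
    fin_cases t <;> simpa using (by assumption)

lemma eta3 (p : DiPath G 2) :
    p = ⟨![p.1 0, p.1 1, p.1 2], mk3 (adj01 p) (adj12 p) (ne02 p)⟩ := by
  apply Subtype.ext
  funext t
  fin_cases t <;> simp

lemma nbm_cond_iff (p q : DiPath G 2) :
    ((∀ k : Fin 2, q.1 k.castSucc = p.1 k.succ) ∧
      IsDiPath G 3 (Fin.snoc p.1 (q.1 (Fin.last 2)))) ↔
    (q.1 0 = p.1 1 ∧ q.1 1 = p.1 2 ∧ q.1 2 ≠ p.1 0) := by
  constructor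
  · rintro ⟨hA, hinj, -⟩
    refine ⟨hA 0, hA 1, ?_⟩
    intro hw
    have h3 : (Fin.snoc p.1 (q.1 (Fin.last 2)) : Fin 4 → V) 3 =
        (Fin.snoc p.1 (q.1 (Fin.last 2)) : Fin 4 → V) 0 := by
      simp [Fin.snoc]
      exact hw
    exact absurd (hinj h3) (by decide)
  · rintro ⟨h0, h1, h2⟩
    have hp01 : p.1 0 ≠ p.1 1 := (adj01 p).ne
    have hp12 : p.1 1 ≠ p.1 2 := (adj12 p).ne
    have hp02 : p.1 0 ≠ p.1 2 := ne02 p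
    have hw1 : q.1 2 ≠ p.1 1 := by rw [← h0]; exact fun h => by simpa using q.2.1 h
    have hw2 : q.1 2 ≠ p.1 2 := by rw [← h1]; exact fun h => by simpa using q.2.1 h
    have hadj : G.Adj (p.1 2) (q.1 2) := by rw [← h1]; exact adj12 q
    refine ⟨fun k => ?_, ?_, ?_⟩
    · fin_cases k <;> simp_all
    · intro a b hab
      fin_cases a <;> fin_cases b <;>
        simp_all [Fin.snoc, castPred0, castLT1, castLT2, last2, castPred1, castPred2]
    · intro t
      fin_cases t <;> simp [Fin.snoc] <;>
        first
        | exact adj01 p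
        | exact adj12 p
        | exact hadj

lemma F1 {lam : ℂ} {ψ : DiPath G 2 → ℂ} (hψ : (NBM G 2) *ᵥ ψ = lam • ψ)
    (i j k : V) (hij : G.Adj i j) (hjk : G.Adj j k) (hik : i ≠ k) :
    lam * ψ ⟨![i,j,k], mk3 hij hjk hik⟩ =
      xvec G ψ ⟨(j,k), hjk⟩ -
        (if h : G.Adj i k then ψ ⟨![j,k,i], mk3 hjk h.symm hij.ne'⟩ else 0) := by
  set p : DiPath G 2 := ⟨![i,j,k], mk3 hij hjk hik⟩ with hp
  have h1 := congrFun hψ p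
  simp only [Pi.smul_apply, smul_eq_mul] at h1
  rw [← h1]
  have hmv : (NBM G 2 *ᵥ ψ) p
      = ∑ q ∈ Finset.univ.filter
          (fun q : DiPath G 2 => q.1 0 = j ∧ q.1 1 = k ∧ q.1 2 ≠ i), ψ q := by
    rw [Finset.sum_filter]
    simp only [mulVec, dotProduct, NBM, ite_mul, one_mul, zero_mul]
    refine Finset.sum_congr rfl fun q _ => ?_
    exact if_congr (nbm_cond_iff p q) rfl rfl
  have hx : xvec G ψ ⟨(j,k), hjk⟩
      = ∑ q ∈ Finset.univ.filter
          (fun q : DiPath G 2 => q.1 0 = j ∧ q.1 1 = k), ψ q := rfl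
  have hsplit := Finset.sum_filter_add_sum_filter_not
    (Finset.univ.filter (fun q : DiPath G 2 => q.1 0 = j ∧ q.1 1 = k))
    (fun q => q.1 2 ≠ i) ψ
  have hs1 : (Finset.univ.filter (fun q : DiPath G 2 => q.1 0 = j ∧ q.1 1 = k)).filter
        (fun q => q.1 2 ≠ i)
      = Finset.univ.filter (fun q : DiPath G 2 => q.1 0 = j ∧ q.1 1 = k ∧ q.1 2 ≠ i) := by
    rw [Finset.filter_filter]
    ext q
    simp [and_assoc]
  have hs2 : ∑ q ∈ (Finset.univ.filter
        (fun q : DiPath G 2 => q.1 0 = j ∧ q.1 1 = k)).filter (fun q => ¬ q.1 2 ≠ i), ψ q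
      = (if h : G.Adj i k then ψ ⟨![j,k,i], mk3 hjk h.symm hij.ne'⟩ else 0) := by
    by_cases h : G.Adj i k
    · rw [dif_pos h]
      have : (Finset.univ.filter
            (fun q : DiPath G 2 => q.1 0 = j ∧ q.1 1 = k)).filter (fun q => ¬ q.1 2 ≠ i)
          = {(⟨![j,k,i], mk3 hjk h.symm hij.ne'⟩ : DiPath G 2)} := by
        ext q
        simp only [Finset.mem_filter, Finset.mem_univ, true_and, not_not,
          Finset.mem_singleton]
        constructor
        · rintro ⟨⟨h0, h1⟩, h2⟩
          apply Subtype.ext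
          funext t
          fin_cases t <;> simp_all
        · rintro rfl
          refine ⟨⟨rfl, rfl⟩, rfl⟩
      rw [this, Finset.sum_singleton]
    · rw [dif_neg h]
      have : (Finset.univ.filter
            (fun q : DiPath G 2 => q.1 0 = j ∧ q.1 1 = k)).filter (fun q => ¬ q.1 2 ≠ i)
          = ∅ := by
        ext q
        simp only [Finset.mem_filter, Finset.mem_univ, true_and, not_not,
          Finset.notMem_empty, iff_false, not_and]
        rintro ⟨h0, h1⟩ h2
        have ha : G.Adj (q.1 1) (q.1 2) := adj12 q
        rw [h1, h2] at ha
        exact h ha.symm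
      rw [this, Finset.sum_empty]
  rw [hmv, hx, ← hsplit, hs1, hs2]
  ring

noncomputable def Xe (G : SimpleGraph V) [DecidableRel G.Adj] (ψ : DiPath G 2 → ℂ) :
    V × V → ℂ := fun a => if h : G.Adj a.1 a.2 then xvec G ψ ⟨a, h⟩ else 0

lemma Xe_adj (ψ : DiPath G 2 → ℂ) {a b : V} (h : G.Adj a b) :
    Xe G ψ (a, b) = xvec G ψ ⟨(a, b), h⟩ := dif_pos h

lemma star {lam : ℂ} {ψ : DiPath G 2 → ℂ} (hψ : (NBM G 2) *ᵥ ψ = lam • ψ)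
    (i j k : V) (hij : G.Adj i j) (hjk : G.Adj j k) (hik : i ≠ k) :
    lam ^ 3 * ψ ⟨![i,j,k], mk3 hij hjk hik⟩ =
      lam ^ 2 * Xe G ψ (j, k) -
        (if G.Adj i k then
          lam * Xe G ψ (k, i) - Xe G ψ (i, j) + ψ ⟨![i,j,k], mk3 hij hjk hik⟩ else 0) := by
  by_cases h : G.Adj i k
  · have e1 : lam * ψ ⟨![i,j,k], mk3 hij hjk hik⟩
        = xvec G ψ ⟨(j,k), hjk⟩ - ψ ⟨![j,k,i], mk3 hjk h.symm hij.ne'⟩ := by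
      have := F1 hψ i j k hij hjk hik
      rw [dif_pos h] at this
      exact this
    have e2 : lam * ψ ⟨![j,k,i], mk3 hjk h.symm hij.ne'⟩
        = xvec G ψ ⟨(k,i), h.symm⟩ - ψ ⟨![k,i,j], mk3 h.symm hij hjk.ne'⟩ := by
      have := F1 hψ j k i hjk h.symm hij.ne'
      rw [dif_pos hij.symm] at this
      exact this
    have e3 : lam * ψ ⟨![k,i,j], mk3 h.symm hij hjk.ne'⟩
        = xvec G ψ ⟨(i,j), hij⟩ - ψ ⟨![i,j,k], mk3 hij hjk hik⟩ := by
      have := F1 hψ k i j h.symm hij hjk.ne'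
      rw [dif_pos hjk.symm] at this
      exact this
    rw [if_pos h, Xe_adj ψ hjk, Xe_adj ψ h.symm, Xe_adj ψ hij]
    linear_combination lam ^ 2 * e1 - lam * e2 + e3
  · have e1 : lam * ψ ⟨![i,j,k], mk3 hij hjk hik⟩ = xvec G ψ ⟨(j,k), hjk⟩ - 0 := by
      have := F1 hψ i j k hij hjk hik
      rw [dif_neg h] at this
      exact this
    rw [if_neg h, Xe_adj ψ hjk]
    linear_combination lam ^ 2 * e1

lemma starP {lam : ℂ} {ψ : DiPath G 2 → ℂ} (hψ : (NBM G 2) *ᵥ ψ = lam • ψ)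
    (p : DiPath G 2) :
    lam ^ 3 * ψ p =
      lam ^ 2 * Xe G ψ (p.1 1, p.1 2) -
        (if G.Adj (p.1 0) (p.1 2) then
          lam * Xe G ψ (p.1 2, p.1 0) - Xe G ψ (p.1 0, p.1 1) + ψ p else 0) := by
  have := star hψ (p.1 0) (p.1 1) (p.1 2) (adj01 p) (adj12 p) (ne02 p)
  rw [← eta3 p] at this
  exact this

lemma sum_and_ite {A : DiPath G 2 → Prop} [DecidablePred A] {P : DiPath G 2 → Prop}
    [DecidablePred P] (g : DiPath G 2 → ℂ) :
    ∑ q ∈ Finset.univ.filter A, (if P q then g q else 0)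
      = ∑ q ∈ Finset.univ.filter (fun q => A q ∧ P q), g q := by
  rw [Finset.sum_filter, Finset.sum_filter]
  refine Finset.sum_congr rfl fun q _ => ?_
  by_cases hA : A q <;> by_cases hP : P q <;> simp [hA, hP]

lemma C1 (ψ : DiPath G 2 → ℂ) (i j : V) (hij : G.Adj i j) :
    (Bmat G *ᵥ xvec G ψ) ⟨(i,j), hij⟩ =
      ∑ q ∈ Finset.univ.filter (fun q : DiPath G 2 => q.1 0 = i ∧ q.1 1 = j),
        Xe G ψ (j, q.1 2) := by
  have h1 : (Bmat G *ᵥ xvec G ψ) ⟨(i,j), hij⟩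
      = ∑ f ∈ Finset.univ.filter
          (fun f : DiEdge G => j = f.1.1 ∧ f.1.2 ≠ i ∧ G.Adj j f.1.2), xvec G ψ f := by
    rw [Finset.sum_filter]
    simp only [mulVec, dotProduct, Bmat, ite_mul, one_mul, zero_mul]
  rw [h1]
  refine Finset.sum_bij'
    (i := fun f hf => (⟨![i, j, f.1.2],
      mk3 hij (Finset.mem_filter.mp hf).2.2.2
        (Ne.symm (Finset.mem_filter.mp hf).2.2.1)⟩ : DiPath G 2))
    (j := fun q hq => (⟨(q.1 1, q.1 2), adj12 q⟩ : DiEdge G)) ?_ ?_ ?_ ?_ ?_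
  · intro f hf
    simp
  · intro q hq
    obtain ⟨h0, h1'⟩ := (Finset.mem_filter.mp hq).2
    have ha := adj12 q
    simp only [Finset.mem_filter, Finset.mem_univ, true_and]
    refine ⟨h1'.symm, ?_, by rwa [h1'] at ha⟩
    rw [← h0]
    exact ne20 q
  · intro f hf
    rcases f with ⟨⟨a, b⟩, hab⟩
    obtain ⟨h0, h1', h2⟩ := (Finset.mem_filter.mp hf).2
    apply Subtype.ext
    show ((j : V), b) = (a, b)
    rw [show j = a from h0]
  · intro q hq
    obtain ⟨h0, h1'⟩ := (Finset.mem_filter.mp hq).2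
    apply Subtype.ext
    funext t
    fin_cases t <;> simp [h0, h1']
  · intro f hf
    rcases f with ⟨⟨a, b⟩, hab⟩
    obtain ⟨h0, h1', h2⟩ := (Finset.mem_filter.mp hf).2
    show xvec G ψ ⟨(a, b), hab⟩ = Xe G ψ (j, b)
    rw [show j = a from h0]
    exact (Xe_adj ψ (show G.Adj a b from hab)).symm

lemma C2 (ψ : DiPath G 2 → ℂ) (i j : V) (hij : G.Adj i j) :
    (dB2 G *ᵥ xvec G ψ) ⟨(i,j), hij⟩ =
      ∑ q ∈ Finset.univ.filter (fun q : DiPath G 2 => q.1 0 = i ∧ q.1 1 = j),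
        (if G.Adj i (q.1 2) then Xe G ψ (q.1 2, i) else 0) := by
  have h1 : (dB2 G *ᵥ xvec G ψ) ⟨(i,j), hij⟩
      = ∑ f ∈ Finset.univ.filter
          (fun f : DiEdge G => f.1.2 = i ∧ G.Adj j f.1.1), xvec G ψ f := by
    rw [Finset.sum_filter]
    simp only [mulVec, dotProduct, dB2, ite_mul, one_mul, zero_mul]
  rw [h1, sum_and_ite]
  refine Finset.sum_bij'
    (i := fun f hf => (⟨![i, j, f.1.1],
      mk3 hij (Finset.mem_filter.mp hf).2.2
        (fun hh => G.ne_of_adj f.2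
          (hh.symm.trans (Finset.mem_filter.mp hf).2.1.symm))⟩ : DiPath G 2))
    (j := fun q hq => (⟨(q.1 2, i),
      ((Finset.mem_filter.mp hq).2.2).symm⟩ : DiEdge G)) ?_ ?_ ?_ ?_ ?_
  · intro f hf
    rcases f with ⟨⟨a, b⟩, hab⟩
    obtain ⟨h0, h1'⟩ := (Finset.mem_filter.mp hf).2
    have h0' : b = i := h0
    simp only [Finset.mem_filter, Finset.mem_univ, true_and]
    refine ⟨⟨rfl, rfl⟩, ?_⟩
    show G.Adj i a
    have hab' : G.Adj a b := hab
    rw [h0'] at hab'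
    exact hab'.symm
  · intro q hq
    obtain ⟨⟨h0, h1'⟩, h2⟩ := (Finset.mem_filter.mp hq).2
    refine Finset.mem_filter.mpr ⟨Finset.mem_univ _, rfl, ?_⟩
    show G.Adj j (q.1 2)
    rw [← h1']
    exact adj12 q
  · intro f hf
    rcases f with ⟨⟨a, b⟩, hab⟩
    obtain ⟨h0, h1'⟩ := (Finset.mem_filter.mp hf).2
    apply Subtype.ext
    show ((a : V), i) = (a, b)
    rw [show b = i from h0]
  · intro q hq
    obtain ⟨⟨h0, h1'⟩, h2⟩ := (Finset.mem_filter.mp hq).2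
    apply Subtype.ext
    funext t
    fin_cases t <;> simp [h0, h1']
  · intro f hf
    rcases f with ⟨⟨a, b⟩, hab⟩
    obtain ⟨h0, h1'⟩ := (Finset.mem_filter.mp hf).2
    have h0' : b = i := h0
    have hai : G.Adj a i := by
      have hab' : G.Adj a b := hab
      rwa [h0'] at hab'
    show xvec G ψ ⟨(a, b), hab⟩ = Xe G ψ (a, i)
    rw [Xe_adj ψ hai]
    congr 1
    apply Subtype.ext
    show ((a : V), b) = (a, i)
    rw [h0']

lemma C3 (ψ : DiPath G 2 → ℂ) (i j : V) (hij : G.Adj i j) :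
    (Ddel G *ᵥ xvec G ψ) ⟨(i,j), hij⟩ =
      ∑ q ∈ Finset.univ.filter (fun q : DiPath G 2 => q.1 0 = i ∧ q.1 1 = j),
        (if G.Adj i (q.1 2) then Xe G ψ (i, j) else 0) := by
  have h1 : (Ddel G *ᵥ xvec G ψ) ⟨(i,j), hij⟩
      = ((Finset.univ.filter fun v => G.Adj i v ∧ G.Adj j v).card : ℂ)
          * xvec G ψ ⟨(i,j), hij⟩ := by
    rw [Ddel, Matrix.mulVec_diagonal]
  have h3 : (Finset.univ.filter
        (fun q : DiPath G 2 => (q.1 0 = i ∧ q.1 1 = j) ∧ G.Adj i (q.1 2))).card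
      = (Finset.univ.filter fun v => G.Adj i v ∧ G.Adj j v).card := by
    refine Finset.card_bij' (fun q _ => q.1 2)
      (fun v hv => (⟨![i, j, v],
        mk3 hij (Finset.mem_filter.mp hv).2.2
          (G.ne_of_adj (Finset.mem_filter.mp hv).2.1)⟩ : DiPath G 2)) ?_ ?_ ?_ ?_
    · intro q hq
      obtain ⟨⟨h0, h1'⟩, h2⟩ := (Finset.mem_filter.mp hq).2
      simp only [Finset.mem_filter, Finset.mem_univ, true_and]
      refine ⟨h2, ?_⟩
      rw [← h1']
      exact adj12 q
    · intro v hv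
      obtain ⟨hiv, hjv⟩ := (Finset.mem_filter.mp hv).2
      simp only [Finset.mem_filter, Finset.mem_univ, true_and]
      exact ⟨⟨rfl, rfl⟩, hiv⟩
    · intro q hq
      obtain ⟨⟨h0, h1'⟩, h2⟩ := (Finset.mem_filter.mp hq).2
      apply Subtype.ext
      funext t
      fin_cases t <;> simp [h0, h1']
    · intro v hv
      rfl
  rw [h1, sum_and_ite, Finset.sum_const, nsmul_eq_mul, h3, Xe_adj ψ hij]

lemma C4 (ψ : DiPath G 2 → ℂ) (i j : V) (hij : G.Adj i j) :
    yvec G ψ ⟨(i,j), hij⟩ =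
      ∑ q ∈ Finset.univ.filter (fun q : DiPath G 2 => q.1 0 = i ∧ q.1 1 = j),
        (if G.Adj i (q.1 2) then ψ q else 0) := by
  rw [sum_and_ite, yvec]
  apply Finset.sum_congr
  · ext q
    simp [and_assoc]
  · intro q hq
    rfl

end Aux

/-- **Identity (F8).** The vectors `x` and `y` satisfy
`λ³x = λ²Bx − λ(ΔB₂)x + (D_Δ)x − y`. -/
theorem identity_F8 (G : SimpleGraph V) [DecidableRel G.Adj]
    (lam : ℂ) (h0 : lam ≠ 0) (ψ : DiPath G 2 → ℂ) (hψ : (NBM G 2) *ᵥ ψ = lam • ψ) :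
    lam ^ 3 • xvec G ψ =
      lam ^ 2 • ((Bmat G) *ᵥ xvec G ψ) - lam • ((dB2 G) *ᵥ xvec G ψ)
        + (Ddel G) *ᵥ xvec G ψ - yvec G ψ := by
  funext e
  obtain ⟨⟨i, j⟩, hij⟩ := e
  simp only [Pi.smul_apply, Pi.sub_apply, Pi.add_apply, smul_eq_mul]
  rw [C1 ψ i j hij, C2 ψ i j hij, C3 ψ i j hij, C4 ψ i j hij]
  have hL : lam ^ 3 * xvec G ψ ⟨(i,j), hij⟩
      = ∑ q ∈ Finset.univ.filter (fun q : DiPath G 2 => q.1 0 = i ∧ q.1 1 = j),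
          lam ^ 3 * ψ q := Finset.mul_sum _ _ _
  rw [hL]
  have hstar : ∀ q ∈ Finset.univ.filter (fun q : DiPath G 2 => q.1 0 = i ∧ q.1 1 = j),
      lam ^ 3 * ψ q =
        lam ^ 2 * Xe G ψ (j, q.1 2)
          - (lam * (if G.Adj i (q.1 2) then Xe G ψ (q.1 2, i) else 0)
             - (if G.Adj i (q.1 2) then Xe G ψ (i, j) else 0)
             + (if G.Adj i (q.1 2) then ψ q else 0)) := by
    intro q hq
    obtain ⟨h0, h1'⟩ := (Finset.mem_filter.mp hq).2
    have hs := starP hψ q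
    rw [h0, h1'] at hs
    rw [hs]
    split_ifs <;> ring
  rw [Finset.sum_congr rfl hstar]
  rw [Finset.sum_sub_distrib, Finset.sum_add_distrib, Finset.sum_sub_distrib,
    ← Finset.mul_sum, ← Finset.mul_sum]
  ring


end PercNB
end

section
/- Suppose λ is a complex number with λ ≠ 0 and λ³ ≠ −1, and z = (x, λ⁻¹x, λ⁻²x, λ⁻³x) is a vector (with x indexed by the directed edges of G) satisfying Mz = λz. Define a complex vector ψ indexed by the length-2 directed paths of G by: ψ_{(i,j,k)} = (λ²x_{(j,k)} − λx_{(k,i)} + x_{(i,j)})/(λ³ + 1) if i and k are adjacent, and ψ_{(i,j,k)} = λ⁻¹x_{(j,k)} if i and k are not adjacent. Then B^(2)ψ = λψ. -/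
open Matrix ENNReal

namespace PercNB

variable {V : Type*} [Fintype V] [DecidableEq V]

section Aux

theorem sum_dite_subtype {W : Type*} [Fintype W] (p : W → Prop) [DecidablePred p]
    (F : {v // p v} → ℂ) :
    ∑ v : {v // p v}, F v = ∑ v : W, if h : p v then F ⟨v, h⟩ else 0 := by
  classical
  rw [← Fintype.sum_subtype_add_sum_subtype p (fun v => if h : p v then F ⟨v, h⟩ else 0)]
  have h1 : ∀ v : {v // p v}, (if h : p v.1 then F ⟨v.1, h⟩ else 0) = F v := by
    intro v; rw [dif_pos v.2]
  have h2 : ∀ v : {v // ¬ p v}, (if h : p v.1 then F ⟨v.1, h⟩ else 0) = 0 := by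
    intro v; rw [dif_neg v.2]
  rw [Finset.sum_congr rfl fun v _ => h1 v, Finset.sum_congr rfl fun v _ => h2 v]
  simp

omit [DecidableEq V] in
theorem sum_diEdge (G : SimpleGraph V) [DecidableRel G.Adj] (F : DiEdge G → ℂ) :
    ∑ f : DiEdge G, F f = ∑ a : V, ∑ b : V, if h : G.Adj a b then F ⟨(a, b), h⟩ else 0 := by
  rw [sum_dite_subtype (fun e : V × V => G.Adj e.1 e.2) F, Fintype.sum_prod_type]

def tripEquiv (G : SimpleGraph V) [DecidableRel G.Adj] :
    DiPath G 2 ≃ {t : V × V × V // IsDiPath G 2 ![t.1, t.2.1, t.2.2]} where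
  toFun q := ⟨(q.1 0, q.1 1, q.1 2), by
    have h : ![q.1 0, q.1 1, q.1 2] = q.1 := by funext i; fin_cases i <;> rfl
    rw [h]; exact q.2⟩
  invFun t := ⟨![t.1.1, t.1.2.1, t.1.2.2], t.2⟩
  left_inv q := by
    apply Subtype.ext; funext i; fin_cases i <;> rfl
  right_inv t := rfl

theorem sum_diPath2 (G : SimpleGraph V) [DecidableRel G.Adj] (F : DiPath G 2 → ℂ) :
    ∑ q : DiPath G 2, F q = ∑ a : V, ∑ b : V, ∑ c : V,
      if h : IsDiPath G 2 ![a, b, c] then F ⟨![a, b, c], h⟩ else 0 := by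
  rw [Fintype.sum_equiv (tripEquiv G) F (fun t => F ((tripEquiv G).symm t)) (by
    intro q; exact (congrArg F (Equiv.symm_apply_apply _ _)).symm),
    sum_dite_subtype (fun t : V × V × V => IsDiPath G 2 ![t.1, t.2.1, t.2.2])]
  rw [Fintype.sum_prod_type]
  congr 1; funext a; rw [Fintype.sum_prod_type]; rfl

/-- `x` evaluated at a pair of vertices, `0` when not an edge. -/
noncomputable def xeF (G : SimpleGraph V) [DecidableRel G.Adj] (x : DiEdge G → ℂ)
    (a b : V) : ℂ :=
  if h : G.Adj a b then x ⟨(a, b), h⟩ else 0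

theorem Bmat_mulVec (G : SimpleGraph V) [DecidableRel G.Adj] (x : DiEdge G → ℂ)
    (a b : V) (hab : G.Adj a b) :
    (Bmat G *ᵥ x) ⟨(a, b), hab⟩ = ∑ l, if G.Adj b l ∧ l ≠ a then xeF G x b l else 0 := by
  show (∑ f, Bmat G ⟨(a,b),hab⟩ f * x f) = _
  rw [sum_diEdge G (fun f => Bmat G ⟨(a,b),hab⟩ f * x f)]
  rw [Finset.sum_eq_single b (fun c _ hc => by
    apply Finset.sum_eq_zero; intro d _
    split_ifs with h
    · simp only [Bmat, ite_mul, one_mul, zero_mul]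
      rw [if_neg (fun hcond => hc hcond.1.symm)]
    · rfl) (fun h => absurd (Finset.mem_univ b) h)]
  refine Finset.sum_congr rfl fun d _ => ?_
  by_cases h : G.Adj b d
  · by_cases hd : d = a <;> simp [Bmat, xeF, h, hd]
  · simp [xeF, h]

theorem dB1_mulVec (G : SimpleGraph V) [DecidableRel G.Adj] (x : DiEdge G → ℂ)
    (a b : V) (hab : G.Adj a b) :
    (dB1 G *ᵥ x) ⟨(a, b), hab⟩
      = ∑ l, if (G.Adj b l ∧ l ≠ a) ∧ G.Adj a l then xeF G x b l else 0 := by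
  show (∑ f, dB1 G ⟨(a,b),hab⟩ f * x f) = _
  rw [sum_diEdge G (fun f => dB1 G ⟨(a,b),hab⟩ f * x f)]
  rw [Finset.sum_eq_single b (fun c _ hc => by
    apply Finset.sum_eq_zero; intro d _
    split_ifs with h
    · simp only [dB1, ite_mul, one_mul, zero_mul]
      rw [if_neg (fun hcond => hc hcond.1.1.symm)]
    · rfl) (fun h => absurd (Finset.mem_univ b) h)]
  refine Finset.sum_congr rfl fun d _ => ?_
  by_cases h : G.Adj b d
  · by_cases hd : d = a <;> by_cases had : G.Adj a d <;> simp [dB1, xeF, h, hd, had]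
  · simp [dB1, xeF, h]

theorem dB2_mulVec (G : SimpleGraph V) [DecidableRel G.Adj] (x : DiEdge G → ℂ)
    (a b : V) (hab : G.Adj a b) :
    (dB2 G *ᵥ x) ⟨(a, b), hab⟩
      = ∑ m, if G.Adj b m ∧ G.Adj m a then xeF G x m a else 0 := by
  show (∑ f, dB2 G ⟨(a,b),hab⟩ f * x f) = _
  rw [sum_diEdge G (fun f => dB2 G ⟨(a,b),hab⟩ f * x f)]
  refine Finset.sum_congr rfl fun c _ => ?_
  rw [Finset.sum_eq_single a (fun d _ hd => by
    split_ifs with h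
    · simp only [dB2, ite_mul, one_mul, zero_mul]
      rw [if_neg (fun hcond => hd hcond.1)]
    · rfl) (fun h => absurd (Finset.mem_univ a) h)]
  by_cases h : G.Adj c a
  · by_cases hbc : G.Adj b c <;> simp [dB2, xeF, h, hbc]
  · simp [dB2, xeF, h]

theorem injective3_iff {a b c : V} :
    Function.Injective ![a, b, c] ↔ a ≠ b ∧ a ≠ c ∧ b ≠ c := by
  have h0 : Function.Injective (Fin.elim0 : Fin 0 → V) := fun x => x.elim0
  simp only [show (![a,b,c] : Fin 3 → V)
      = Fin.cons a (Fin.cons b (Fin.cons c Fin.elim0)) from rfl,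
    Fin.cons_injective_iff, Set.mem_range, not_exists, h0, and_true]
  simp [Fin.forall_fin_two, Fin.forall_fin_one]
  tauto

theorem injective4_iff {a b c d : V} :
    Function.Injective ![a, b, c, d]
      ↔ (a ≠ b ∧ a ≠ c ∧ a ≠ d) ∧ (b ≠ c ∧ b ≠ d) ∧ c ≠ d := by
  have h0 : Function.Injective (Fin.elim0 : Fin 0 → V) := fun x => x.elim0
  simp only [show (![a,b,c,d] : Fin 4 → V)
      = Fin.cons a (Fin.cons b (Fin.cons c (Fin.cons d Fin.elim0))) from rfl,
    Fin.cons_injective_iff, Set.mem_range, not_exists, h0, and_true]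
  simp [Fin.forall_fin_succ]
  tauto

theorem isDiPath2_iff (G : SimpleGraph V) {a b c : V} :
    IsDiPath G 2 ![a, b, c] ↔ (a ≠ b ∧ a ≠ c ∧ b ≠ c) ∧ (G.Adj a b ∧ G.Adj b c) := by
  unfold IsDiPath
  rw [injective3_iff]
  refine and_congr Iff.rfl ⟨fun h => ⟨h 0, h 1⟩, fun h t => ?_⟩
  fin_cases t
  · exact h.1
  · exact h.2

theorem isDiPath3_iff (G : SimpleGraph V) {a b c d : V} :
    IsDiPath G 3 ![a, b, c, d]
      ↔ ((a ≠ b ∧ a ≠ c ∧ a ≠ d) ∧ (b ≠ c ∧ b ≠ d) ∧ c ≠ d)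
        ∧ (G.Adj a b ∧ G.Adj b c ∧ G.Adj c d) := by
  unfold IsDiPath
  rw [injective4_iff]
  refine and_congr Iff.rfl ⟨fun h => ⟨h 0, h 1, h 2⟩, fun h t => ?_⟩
  fin_cases t
  · exact h.1
  · exact h.2.1
  · exact h.2.2

theorem snoc_eq_vec (p : Fin 3 → V) (c : V) :
    (Fin.snoc p c : Fin 4 → V) = ![p 0, p 1, p 2, c] := by
  funext i; fin_cases i <;> simp [Fin.snoc] <;> rfl

theorem isDiPath3_snoc_iff (G : SimpleGraph V) (p : DiPath G 2) (c : V) :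
    IsDiPath G 3 (Fin.snoc p.1 c) ↔ G.Adj (p.1 2) c ∧ c ≠ p.1 0 ∧ c ≠ p.1 1 := by
  have h01 : p.1 0 ≠ p.1 1 := fun h => by simpa using p.2.1 h
  have h02 : p.1 0 ≠ p.1 2 := fun h => by simpa using p.2.1 h
  have h12 : p.1 1 ≠ p.1 2 := fun h => by simpa using p.2.1 h
  have hij : G.Adj (p.1 0) (p.1 1) := p.2.2 0
  have hjk : G.Adj (p.1 1) (p.1 2) := p.2.2 1
  rw [snoc_eq_vec, isDiPath3_iff]
  constructor
  · rintro ⟨⟨⟨-, -, h1⟩, ⟨-, h2⟩, -⟩, -, -, h3⟩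
    exact ⟨h3, fun h => h1 h.symm, fun h => h2 h.symm⟩
  · rintro ⟨h1, h2, h3⟩
    exact ⟨⟨⟨h01, h02, fun h => h2 h.symm⟩, ⟨h12, fun h => h3 h.symm⟩, h1.ne⟩,
      hij, hjk, h1⟩

theorem NBM_apply (G : SimpleGraph V) [DecidableRel G.Adj] (ψ : DiPath G 2 → ℂ)
    (p : DiPath G 2) :
    (NBM G 2 *ᵥ ψ) p = ∑ c : V, if h : IsDiPath G 2 ![p.1 1, p.1 2, c]
      then (if G.Adj (p.1 2) c ∧ c ≠ p.1 0 ∧ c ≠ p.1 1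
        then ψ ⟨![p.1 1, p.1 2, c], h⟩ else 0)
      else 0 := by
  show (∑ q, NBM G 2 p q * ψ q) = _
  rw [sum_diPath2 G (fun q => NBM G 2 p q * ψ q)]
  rw [Finset.sum_eq_single (p.1 1) (fun a _ ha => by
    apply Finset.sum_eq_zero; intro b _
    apply Finset.sum_eq_zero; intro c _
    split_ifs with h
    · simp only [NBM, ite_mul, one_mul, zero_mul]
      rw [if_neg (fun hcond => ha (hcond.1 0))]
    · rfl) (fun h => absurd (Finset.mem_univ _) h)]
  rw [Finset.sum_eq_single (p.1 2) (fun b _ hb => by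
    apply Finset.sum_eq_zero; intro c _
    split_ifs with h
    · simp only [NBM, ite_mul, one_mul, zero_mul]
      rw [if_neg (fun hcond => hb (hcond.1 1))]
    · rfl) (fun h => absurd (Finset.mem_univ _) h)]
  refine Finset.sum_congr rfl fun c _ => ?_
  by_cases h : IsDiPath G 2 ![p.1 1, p.1 2, c]
  · rw [dif_pos h, dif_pos h]
    have hiff : ((∀ k : Fin 2, (![p.1 1, p.1 2, c] : Fin 3 → V) k.castSucc = p.1 k.succ) ∧
        IsDiPath G (2+1) (Fin.snoc p.1 ((![p.1 1, p.1 2, c] : Fin 3 → V) (Fin.last 2))))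
        ↔ (G.Adj (p.1 2) c ∧ c ≠ p.1 0 ∧ c ≠ p.1 1) := by
      constructor
      · intro hc; exact (isDiPath3_snoc_iff G p c).1 hc.2
      · intro hc; exact ⟨fun k => by fin_cases k <;> rfl, (isDiPath3_snoc_iff G p c).2 hc⟩
    by_cases hc : G.Adj (p.1 2) c ∧ c ≠ p.1 0 ∧ c ≠ p.1 1
    · rw [if_pos hc, NBM, if_pos (hiff.2 hc), one_mul]
    · rw [if_neg hc, NBM, if_neg (fun hx => hc (hiff.1 hx)), zero_mul]
  · rw [dif_neg h, dif_neg h]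

end Aux

/-- If `λ ≠ 0`, `λ³ ≠ -1` and `z = (x, λ⁻¹x, λ⁻²x, λ⁻³x)` satisfies `Mz = λz`, then the
vector `ψ` defined by `ψ_{(i,j,k)} = (λ²x_{(j,k)} − λx_{(k,i)} + x_{(i,j)})/(λ³+1)` when `i`
and `k` are adjacent and `ψ_{(i,j,k)} = λ⁻¹x_{(j,k)}` otherwise satisfies `B^(2)ψ = λψ`. -/
theorem nbm_eigen_of_M_eigen (G : SimpleGraph V) [DecidableRel G.Adj]
    (lam : ℂ) (h0 : lam ≠ 0) (h3 : lam ^ 3 ≠ -1) (x : DiEdge G → ℂ)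
    (hz : (Mmat G) *ᵥ blockVec lam x = lam • blockVec lam x) :
    (NBM G 2) *ᵥ psiOf G lam x = lam • psiOf G lam x := by
  classical
  have hrow : ∀ e : DiEdge G,
      (Bmat G *ᵥ x) e - lam⁻¹ * (dB2 G *ᵥ x) e
        + (lam^2)⁻¹ * ((Ddel G *ᵥ x) e - x e)
        + (lam^3)⁻¹ * ((Bmat G *ᵥ x) e - (dB1 G *ᵥ x) e) = lam * x e := by
    intro e
    have h := congrFun hz (Sum.inl (Sum.inl e))
    simp only [Mmat, blockVec, fromBlocks_mulVec, Sum.elim_inl, Pi.add_apply,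
      mulVec_smul, sub_mulVec, neg_mulVec, one_mulVec, Pi.smul_apply, Pi.sub_apply,
      Pi.neg_apply, smul_eq_mul, Pi.zero_apply, Sum.elim_comp_inl, Sum.elim_comp_inr] at h
    linear_combination h
  have hlam3 : lam ^ 3 + 1 ≠ 0 := fun h => h3 (by linear_combination h)
  funext p
  have hij : G.Adj (p.1 0) (p.1 1) := p.2.2 0
  have hjk : G.Adj (p.1 1) (p.1 2) := p.2.2 1
  have h01 : p.1 0 ≠ p.1 1 := fun h => by simpa using p.2.1 h
  have h02 : p.1 0 ≠ p.1 2 := fun h => by simpa using p.2.1 h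
  have h12 : p.1 1 ≠ p.1 2 := fun h => by simpa using p.2.1 h
  have KE := hrow ⟨(p.1 1, p.1 2), hjk⟩
  rw [Bmat_mulVec G x _ _ hjk, dB2_mulVec G x _ _ hjk, dB1_mulVec G x _ _ hjk,
    show (Ddel G *ᵥ x) ⟨(p.1 1, p.1 2), hjk⟩ =
      ((Finset.univ.filter fun v => G.Adj (p.1 1) v ∧ G.Adj (p.1 2) v).card : ℂ)
        * x ⟨(p.1 1, p.1 2), hjk⟩ from mulVec_diagonal _ _ _,
    show x ⟨(p.1 1, p.1 2), hjk⟩ = xeF G x (p.1 1) (p.1 2) from by rw [xeF, dif_pos hjk]] at KE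
  show (NBM G 2 *ᵥ psiOf G lam x) p = lam * psiOf G lam x p
  rw [NBM_apply G (psiOf G lam x) p]
  have hpt : ∀ c : V,
      (if h : IsDiPath G 2 ![p.1 1, p.1 2, c]
        then (if G.Adj (p.1 2) c ∧ c ≠ p.1 0 ∧ c ≠ p.1 1
          then psiOf G lam x ⟨![p.1 1, p.1 2, c], h⟩ else 0)
        else 0)
      = lam⁻¹ * ((if G.Adj (p.1 2) c ∧ c ≠ p.1 1 then xeF G x (p.1 2) c else 0)
            - (if (G.Adj (p.1 2) c ∧ c ≠ p.1 1) ∧ G.Adj (p.1 1) c then xeF G x (p.1 2) c else 0))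
        + (lam ^ 2 * ((if (G.Adj (p.1 2) c ∧ c ≠ p.1 1) ∧ G.Adj (p.1 1) c then xeF G x (p.1 2) c else 0)
              - (if c = p.1 0 ∧ G.Adj (p.1 0) (p.1 2) then xeF G x (p.1 2) c else 0))
          - lam * ((if G.Adj (p.1 2) c ∧ G.Adj c (p.1 1) then xeF G x c (p.1 1) else 0)
              - (if c = p.1 0 ∧ G.Adj (p.1 0) (p.1 2) then xeF G x c (p.1 1) else 0))
          + ((if G.Adj (p.1 1) c ∧ G.Adj (p.1 2) c then xeF G x (p.1 1) (p.1 2) else 0)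
              - (if c = p.1 0 ∧ G.Adj (p.1 0) (p.1 2) then xeF G x (p.1 1) (p.1 2) else 0)))
          / (lam ^ 3 + 1) := by
    intro c
    by_cases hkc : G.Adj (p.1 2) c
    · have hck : c ≠ p.1 2 := fun h => G.irrefl (h ▸ hkc)
      by_cases hcj : c = p.1 1
      · have hnjc : ¬ G.Adj (p.1 1) c := fun h => G.irrefl (hcj ▸ h)
        have hncj : ¬ G.Adj c (p.1 1) := fun h => hnjc h.symm
        have hnci : c ≠ p.1 0 := fun h => h01 (h.symm.trans hcj)
        simp [hcj, hnjc, hncj, hnci, Ne.symm h01]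
      · by_cases hci : c = p.1 0
        · subst hci
          have hik : G.Adj (p.1 0) (p.1 2) := hkc.symm
          have hpath : IsDiPath G 2 ![p.1 1, p.1 2, p.1 0] := (isDiPath2_iff G).2
            ⟨⟨h12, Ne.symm h01, Ne.symm h02⟩, hjk, hkc⟩
          simp [hpath, hkc, hij, hij.symm, hik, hjk, Ne.symm h01, h01, h02]
        · by_cases hjc : G.Adj (p.1 1) c
          · have hcj2 : G.Adj c (p.1 1) := hjc.symm
            have hpath : IsDiPath G 2 ![p.1 1, p.1 2, c] := (isDiPath2_iff G).2
              ⟨⟨h12, fun h => hcj h.symm, fun h => hck h.symm⟩, hjk, hkc⟩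
            have hpsi : psiOf G lam x ⟨![p.1 1, p.1 2, c], hpath⟩
                = (lam ^ 2 * xeF G x (p.1 2) c - lam * xeF G x c (p.1 1)
                    + xeF G x (p.1 1) (p.1 2)) / (lam ^ 3 + 1) := by
              simp [psiOf, xeF, hjc, hkc, hcj2, hjk]
            rw [dif_pos hpath, if_pos ⟨hkc, hci, hcj⟩, hpsi]
            simp [hkc, hcj, hjc, hcj2, hci]
          · have hncj : ¬ G.Adj c (p.1 1) := fun h => hjc h.symm
            have hpath : IsDiPath G 2 ![p.1 1, p.1 2, c] := (isDiPath2_iff G).2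
              ⟨⟨h12, fun h => hcj h.symm, fun h => hck h.symm⟩, hjk, hkc⟩
            have hpsi : psiOf G lam x ⟨![p.1 1, p.1 2, c], hpath⟩
                = lam⁻¹ * xeF G x (p.1 2) c := by
              simp [psiOf, xeF, hjc, hkc]
            rw [dif_pos hpath, if_pos ⟨hkc, hci, hcj⟩, hpsi]
            simp [hkc, hcj, hjc, hncj, hci]
    · have hnci : ¬ (c = p.1 0 ∧ G.Adj (p.1 0) (p.1 2)) := by
        rintro ⟨rfl, hik⟩; exact hkc hik.symm
      have hnpath : ¬ IsDiPath G 2 ![p.1 1, p.1 2, c] :=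
        fun h => hkc ((isDiPath2_iff G).1 h).2.2
      rw [dif_neg hnpath]
      simp [hkc, hnci]
  rw [Finset.sum_congr rfl (fun c _ => hpt c)]
  simp only [Finset.sum_add_distrib, Finset.sum_sub_distrib, ← Finset.mul_sum,
    ← Finset.sum_div]
  have hE1 : (∑ c : V, if c = p.1 0 ∧ G.Adj (p.1 0) (p.1 2) then xeF G x (p.1 2) c else 0)
      = if G.Adj (p.1 0) (p.1 2) then xeF G x (p.1 2) (p.1 0) else 0 := by
    by_cases hik : G.Adj (p.1 0) (p.1 2) <;> simp [hik, Finset.sum_ite_eq']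
  have hE2 : (∑ c : V, if c = p.1 0 ∧ G.Adj (p.1 0) (p.1 2) then xeF G x c (p.1 1) else 0)
      = if G.Adj (p.1 0) (p.1 2) then xeF G x (p.1 0) (p.1 1) else 0 := by
    by_cases hik : G.Adj (p.1 0) (p.1 2) <;> simp [hik, Finset.sum_ite_eq']
  have hE3 : (∑ c : V, if c = p.1 0 ∧ G.Adj (p.1 0) (p.1 2)
        then xeF G x (p.1 1) (p.1 2) else 0)
      = if G.Adj (p.1 0) (p.1 2) then xeF G x (p.1 1) (p.1 2) else 0 := by
    by_cases hik : G.Adj (p.1 0) (p.1 2) <;> simp [hik, Finset.sum_ite_eq']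
  have hSD : (∑ c : V, if G.Adj (p.1 1) c ∧ G.Adj (p.1 2) c
        then xeF G x (p.1 1) (p.1 2) else 0)
      = ((Finset.univ.filter fun v => G.Adj (p.1 1) v ∧ G.Adj (p.1 2) v).card : ℂ)
          * xeF G x (p.1 1) (p.1 2) := by
    rw [Finset.sum_ite, Finset.sum_const, Finset.sum_const_zero, add_zero, nsmul_eq_mul]
  rw [hE1, hE2, hE3, hSD]
  set S1 : ℂ := ∑ c : V, if G.Adj (p.1 2) c ∧ c ≠ p.1 1 then xeF G x (p.1 2) c else 0 with hS1
  set S4 : ℂ := ∑ c : V, if (G.Adj (p.1 2) c ∧ c ≠ p.1 1) ∧ G.Adj (p.1 1) c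
    then xeF G x (p.1 2) c else 0 with hS4
  set S2 : ℂ := ∑ c : V, if G.Adj (p.1 2) c ∧ G.Adj c (p.1 1)
    then xeF G x c (p.1 1) else 0 with hS2
  set D : ℂ := ((Finset.univ.filter fun v => G.Adj (p.1 1) v ∧ G.Adj (p.1 2) v).card : ℂ)
    with hD
  set X : ℂ := xeF G x (p.1 1) (p.1 2) with hX
  have KE3 : lam ^ 3 * S1 - lam ^ 2 * S2 + lam * (D * X - X) + (S1 - S4)
      = lam ^ 4 * X := by
    field_simp at KE
    apply mul_left_cancel₀ (show (lam ^ 3 : ℂ) ≠ 0 from pow_ne_zero _ h0)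
    linear_combination lam ^ 3 * KE
  by_cases hik : G.Adj (p.1 0) (p.1 2)
  · rw [if_pos hik, if_pos hik, if_pos hik]
    have hpsi : psiOf G lam x p = (lam ^ 2 * xeF G x (p.1 1) (p.1 2)
        - lam * xeF G x (p.1 2) (p.1 0) + xeF G x (p.1 0) (p.1 1)) / (lam ^ 3 + 1) := by
      simp [psiOf, xeF, hik, hjk, hik.symm, hij]
    rw [hpsi]
    field_simp
    linear_combination KE3
  · rw [if_neg hik, if_neg hik, if_neg hik]
    have hpsi : psiOf G lam x p = lam⁻¹ * xeF G x (p.1 1) (p.1 2) := by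
      simp [psiOf, xeF, hik, hjk]
    rw [hpsi]
    field_simp
    linear_combination KE3

end PercNB
end
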